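/- arXiv:1412.4309 — 3 statements merged into one kernel-verified Lean document; each statement's English description precedes it below -/
import Mathlib

section
/- The function f_K(x;a) = √(1−a²) / (π(1−x²)√(a²−x²)) on (−a,a) (and 0 outside) is a probability density on ℝ multiplied by weights: specifically, for 0 < a < 1, ∫_{−a}^{a} √(1−a²)/(π(1−x²)√(a²−x²)) dx = 1. -/
open Real Set MeasureTheory

theorem konno_density_integral (a : ℝ) (ha0 : 0 < a) (ha1 : a < 1) :
    ∫ x in (-a)..a, Real.sqrt (1 - a ^ 2) / (π * (1 - x ^ 2) * Real.sqrt (a ^ 2 - x ^ 2)) = 1 := by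
  have ha2 : (0:ℝ) < 1 - a ^ 2 := by nlinarith
  set c : ℝ := Real.sqrt (1 - a ^ 2) with hc
  have hcpos : 0 < c := Real.sqrt_pos.mpr ha2
  have hc2 : c ^ 2 = 1 - a ^ 2 := Real.sq_sqrt ha2.le
  set F : ℝ → ℝ := fun x => Real.arcsin (c * x / (a * Real.sqrt (1 - x ^ 2))) / π with hF
  set g : ℝ → ℝ := fun x => c / (π * (1 - x ^ 2) * Real.sqrt (a ^ 2 - x ^ 2)) with hg
  have hπ : (0:ℝ) < π := Real.pi_pos
  have hderiv : ∀ x ∈ Ioo (-a) a, HasDerivAt F (g x) x := by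
    intro x hx
    have hx2 : x ^ 2 < a ^ 2 := by
      have := abs_lt.mpr ⟨hx.1, hx.2⟩
      nlinarith [abs_nonneg x, sq_abs x]
    have h1x : (0:ℝ) < 1 - x ^ 2 := by nlinarith
    have hax : (0:ℝ) < a ^ 2 - x ^ 2 := by linarith
    have hsx : Real.sqrt (1 - x ^ 2) > 0 := Real.sqrt_pos.mpr h1x
    have hsx2 : Real.sqrt (1 - x ^ 2) ^ 2 = 1 - x ^ 2 := Real.sq_sqrt h1x.le
    have hsax : Real.sqrt (a ^ 2 - x ^ 2) > 0 := Real.sqrt_pos.mpr hax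
    have hsax2 : Real.sqrt (a ^ 2 - x ^ 2) ^ 2 = a ^ 2 - x ^ 2 := Real.sq_sqrt hax.le
    have hden : a * Real.sqrt (1 - x ^ 2) ≠ 0 := by positivity
    -- derivative of inner sqrt
    have hs : HasDerivAt (fun y : ℝ => Real.sqrt (1 - y ^ 2))
        (-(2 * x) / (2 * Real.sqrt (1 - x ^ 2))) x := by
      have h1 : HasDerivAt (fun y : ℝ => 1 - y ^ 2) (-(2 * x)) x := by
        simpa using ((hasDerivAt_pow 2 x).const_sub 1)
      have h2 := (Real.hasDerivAt_sqrt h1x.ne').comp x h1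
      refine h2.congr_deriv ?_
      ring
    set u : ℝ → ℝ := fun y => c * y / (a * Real.sqrt (1 - y ^ 2)) with hu
    have hux : u x = c * x / (a * Real.sqrt (1 - x ^ 2)) := rfl
    have hu' : HasDerivAt u
        ((c * (a * Real.sqrt (1 - x ^ 2)) - c * x * (a * (-(2 * x) / (2 * Real.sqrt (1 - x ^ 2)))))
          / (a * Real.sqrt (1 - x ^ 2)) ^ 2) x := by
      have := ((hasDerivAt_id x).const_mul c).div (hs.const_mul a) hden
      exact this.congr_deriv (by simp only [mul_one, id_eq])
    have hu2 : (u x) ^ 2 = (1 - a ^ 2) * x ^ 2 / (a ^ 2 * (1 - x ^ 2)) := by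
      rw [hux, div_pow, mul_pow, mul_pow, hc2, hsx2]
    have h1u : 1 - (u x) ^ 2 = (a ^ 2 - x ^ 2) / (a ^ 2 * (1 - x ^ 2)) := by
      rw [hu2]; field_simp; ring
    have huxlt : (u x) ^ 2 < 1 := by
      rw [hu2]
      rw [div_lt_one (by positivity)]
      nlinarith
    have hne1 : u x ≠ -1 := by
      intro h; rw [h] at huxlt; norm_num at huxlt
    have hne2 : u x ≠ 1 := by
      intro h; rw [h] at huxlt; norm_num at huxlt
    have hsqrt1u : Real.sqrt (1 - (u x) ^ 2) = Real.sqrt (a ^ 2 - x ^ 2) / (a * Real.sqrt (1 - x ^ 2)) := by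
      rw [h1u, Real.sqrt_div hax.le, Real.sqrt_mul (sq_nonneg a), Real.sqrt_sq ha0.le]
    have harc : HasDerivAt F
        ((1 / Real.sqrt (1 - (u x) ^ 2) *
          ((c * (a * Real.sqrt (1 - x ^ 2)) - c * x * (a * (-(2 * x) / (2 * Real.sqrt (1 - x ^ 2)))))
          / (a * Real.sqrt (1 - x ^ 2)) ^ 2)) / π) x := by
      exact ((Real.hasDerivAt_arcsin hne1 hne2).comp x hu').div_const π
    convert harc using 1
    rw [hsqrt1u, hg]
    field_simp
    linear_combination (x ^ 2) * hsx2
  have hcont : ContinuousOn F (Icc (-a) a) := by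
    apply ContinuousOn.div_const
    apply Real.continuous_arcsin.comp_continuousOn
    apply ContinuousOn.div
    · fun_prop
    · fun_prop
    · intro x hx
      have h1x : (0:ℝ) < 1 - x ^ 2 := by
        have h1 := hx.1; have h2 := hx.2; nlinarith
      positivity
  have hnonneg : ∀ x ∈ Ioo (-a) a, 0 ≤ g x := by
    intro x hx
    have h1x : (0:ℝ) < 1 - x ^ 2 := by
      have h1 := hx.1; have h2 := hx.2; nlinarith
    have : (0:ℝ) ≤ Real.sqrt (a ^ 2 - x ^ 2) := Real.sqrt_nonneg _
    positivity
  have hint : IntervalIntegrable g volume (-a) a := by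
    rw [intervalIntegrable_iff_integrableOn_Ioo_of_le (by linarith)]
    exact (intervalIntegral.integrableOn_deriv_of_nonneg hcont hderiv hnonneg).mono_set Ioo_subset_Ioc_self
  have key := intervalIntegral.integral_eq_sub_of_hasDerivAt_of_le (by linarith : -a ≤ a)
    hcont hderiv hint
  have hFa : F a = 1 / 2 := by
    have : c * a / (a * Real.sqrt (1 - a ^ 2)) = 1 := by
      rw [← hc]; field_simp
    rw [hF]; simp only [this, Real.arcsin_one]; field_simp
  have hFma : F (-a) = -(1 / 2) := by
    have : c * (-a) / (a * Real.sqrt (1 - (-a) ^ 2)) = -1 := by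
      rw [neg_sq, ← hc]; field_simp
    rw [hF]; simp only [this, Real.arcsin_neg_one]; field_simp
  calc ∫ x in (-a)..a, Real.sqrt (1 - a ^ 2) / (π * (1 - x ^ 2) * Real.sqrt (a ^ 2 - x ^ 2))
      = ∫ x in (-a)..a, g x := by rfl
    _ = F a - F (-a) := key
    _ = 1 := by rw [hFa, hFma]; norm_num
end

section
/- For w(x) = 2(1 − x³ + x² − x)/(x² + 4), one has ∫_{−1/√2}^{1/√2} w(x) · f_K(x; 1/√2) dx = 3/5, where f_K(x;1/√2) = (1/√2)/(π(1−x²)√(1/2 − x²)). -/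
set_option maxHeartbeats 1000000

open Real Set

noncomputable def Faux (x : ℝ) : ℝ :=
  Real.sqrt 2 / π *
    ((2/5) * (Real.sqrt 2 * Real.arcsin ((1 + 2*x) / (Real.sqrt 2 * (x + 1))))
      + (3/5) * (-(Real.sqrt 2/6) * (Real.log (3/Real.sqrt 2 + Real.sqrt (1/2 - x^2))
              - Real.log (3/Real.sqrt 2 - Real.sqrt (1/2 - x^2)))
         - (Real.sqrt 2/6) * Real.arcsin (3*x / Real.sqrt (x^2 + 4))))

lemma Faux_deriv (x : ℝ) (h1 : -(1/Real.sqrt 2) < x) (h2 : x < 1/Real.sqrt 2) :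
    HasDerivAt Faux
      ((2 * (1 - x ^ 3 + x ^ 2 - x) / (x ^ 2 + 4)) *
        ((1 / Real.sqrt 2) / (π * (1 - x ^ 2) * Real.sqrt (1 / 2 - x ^ 2)))) x := by
  have hr0 : (0:ℝ) < Real.sqrt 2 := Real.sqrt_pos.mpr (by norm_num)
  have hr : Real.sqrt 2 * Real.sqrt 2 = 2 := Real.mul_self_sqrt (by norm_num)
  have hr2 : Real.sqrt 2 ^ 2 = 2 := by rw [sq, hr]
  have hr1 : (1:ℝ) < Real.sqrt 2 := by nlinarith
  have hinv : (1/Real.sqrt 2)^2 = 1/2 := by rw [div_pow, one_pow, hr2]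
  have hx1 : 0 < x + 1 := by
    have : 1/Real.sqrt 2 < 1 := (div_lt_one hr0).mpr hr1
    linarith
  have hxlt : x < 1 := by
    have : 1/Real.sqrt 2 < 1 := (div_lt_one hr0).mpr hr1
    linarith
  have hx2' : x^2 < 1/2 := by
    nlinarith [mul_pos (sub_pos.2 h2) (show 0 < 1/Real.sqrt 2 + x by linarith)]
  have hs2 : 0 < 1/2 - x^2 := by linarith
  set s := Real.sqrt (1/2 - x^2) with hsdef
  have hs0 : 0 < s := Real.sqrt_pos.mpr hs2
  have hss : s^2 = 1/2 - x^2 := Real.sq_sqrt hs2.le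
  set q := Real.sqrt (x^2+4) with hqdef
  have hq4 : (0:ℝ) < x^2+4 := by positivity
  have hq0 : 0 < q := Real.sqrt_pos.mpr hq4
  have hqq : q^2 = x^2+4 := Real.sq_sqrt hq4.le
  -- piece 1 : arcsin u
  have hden : Real.sqrt 2 * (x+1) ≠ 0 := by positivity
  have hu : HasDerivAt (fun y => (1 + 2*y) / (Real.sqrt 2 * (y+1)))
      ((2 * (Real.sqrt 2*(x+1)) - (1+2*x)*Real.sqrt 2) / (Real.sqrt 2*(x+1))^2) x := by
    apply HasDerivAt.div
    · simpa using ((hasDerivAt_id x).const_mul 2).const_add 1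
    · simpa using ((hasDerivAt_id x).add_const 1).const_mul (Real.sqrt 2)
    · exact hden
  have h1u : 1 - ((1+2*x)/(Real.sqrt 2*(x+1)))^2 = (s/(x+1))^2 := by
    rw [div_pow, div_pow, hss, mul_pow, hr2]
    field_simp
    ring
  have husq : ((1+2*x)/(Real.sqrt 2*(x+1)))^2 < 1 := by
    nlinarith [h1u, pow_pos (div_pos hs0 hx1) 2]
  have hune1 : ((1+2*x)/(Real.sqrt 2*(x+1))) ≠ 1 := by
    intro h; rw [h] at husq; norm_num at husq
  have hune1' : ((1+2*x)/(Real.sqrt 2*(x+1))) ≠ -1 := by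
    intro h; rw [h] at husq; norm_num at husq
  have e1 : Real.sqrt (1 - ((1+2*x)/(Real.sqrt 2*(x+1)))^2) = s/(x+1) := by
    rw [h1u, Real.sqrt_sq (by positivity)]
  have hA : HasDerivAt (fun y => Real.arcsin ((1+2*y)/(Real.sqrt 2*(y+1))))
      (1/(Real.sqrt 2 * (x+1) * s)) x := by
    have := (Real.hasDerivAt_arcsin hune1' hune1).comp x hu
    refine this.congr_deriv (Eq.symm ?_)
    rw [e1, mul_pow, hr2]
    field_simp
    ring_nf
    rw [hr2]
  -- piece 2 : arcsin v
  have hq' : HasDerivAt (fun y => Real.sqrt (y^2+4)) (1/(2*q) * (2*x)) x := by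
    have hinner : HasDerivAt (fun y:ℝ => y^2+4) (2*x) x := by
      simpa using (hasDerivAt_pow 2 x).add_const 4
    exact (Real.hasDerivAt_sqrt (by positivity)).comp x hinner
  have hv : HasDerivAt (fun y => 3*y / Real.sqrt (y^2+4))
      ((3*q - 3*x*(1/(2*q)*(2*x)))/q^2) x := by
    exact HasDerivAt.div (by simpa using (hasDerivAt_id x).const_mul 3) hq' (ne_of_gt hq0)
  have h1v : 1 - (3*x/q)^2 = (2*Real.sqrt 2*s/q)^2 := by
    rw [div_pow, div_pow, mul_pow (2*Real.sqrt 2) s, mul_pow 2 (Real.sqrt 2), hr2, hss, hqq]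
    field_simp
    ring
  have hvsq : (3*x/q)^2 < 1 := by
    nlinarith [h1v, pow_pos (div_pos (by positivity : (0:ℝ) < 2*Real.sqrt 2*s) hq0) 2]
  have hvne1 : (3*x/q) ≠ 1 := by intro h; rw [h] at hvsq; norm_num at hvsq
  have hvne1' : (3*x/q) ≠ -1 := by intro h; rw [h] at hvsq; norm_num at hvsq
  have e2 : Real.sqrt (1 - (3*x/q)^2) = 2*Real.sqrt 2*s/q := by
    rw [h1v, Real.sqrt_sq (by positivity)]
  have hB : HasDerivAt (fun y => Real.arcsin (3*y/Real.sqrt (y^2+4)))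
      (3*Real.sqrt 2/((x^2+4) * s)) x := by
    have := (Real.hasDerivAt_arcsin hvne1' hvne1).comp x hv
    refine this.congr_deriv (Eq.symm ?_)
    rw [e2]
    field_simp
    ring_nf
    rw [hr2]
    linear_combination (-x^2) * hqq
  -- piece 3 : logs
  have hsd : HasDerivAt (fun y => Real.sqrt (1/2 - y^2)) (1/(2*s) * (-(2*x))) x := by
    have h0 : HasDerivAt (fun y:ℝ => y^2) (2*x) x := by simpa using hasDerivAt_pow 2 x
    have hinner : HasDerivAt (fun y:ℝ => 1/2 - y^2) (-(2*x)) x := h0.const_sub (1/2)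
    exact (Real.hasDerivAt_sqrt (ne_of_gt hs2)).comp x hinner
  have hks : s < 3/Real.sqrt 2 := by
    nlinarith [hss, hs0, div_pos (by norm_num : (0:ℝ)<3) hr0,
      (show (3/Real.sqrt 2)^2 = 9/2 by rw [div_pow, hr2]; norm_num)]
  have hk1 : (0:ℝ) < 3/Real.sqrt 2 + s := by positivity
  have hk2 : (0:ℝ) < 3/Real.sqrt 2 - s := by linarith
  have hl1 : HasDerivAt (fun y => Real.log (3/Real.sqrt 2 + Real.sqrt (1/2 - y^2)))
      ((1/(2*s) * (-(2*x))) / (3/Real.sqrt 2 + s)) x :=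
    HasDerivAt.log (hsd.const_add (3/Real.sqrt 2)) (ne_of_gt hk1)
  have hl2 : HasDerivAt (fun y => Real.log (3/Real.sqrt 2 - Real.sqrt (1/2 - y^2)))
      ((-(1/(2*s) * (-(2*x)))) / (3/Real.sqrt 2 - s)) x :=
    HasDerivAt.log (hsd.const_sub (3/Real.sqrt 2)) (ne_of_gt hk2)
  have hL : HasDerivAt (fun y => Real.log (3/Real.sqrt 2 + Real.sqrt (1/2 - y^2))
      - Real.log (3/Real.sqrt 2 - Real.sqrt (1/2 - y^2)))
      (-(3*Real.sqrt 2*x)/((x^2+4)*s)) x := by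
    refine (hl1.sub hl2).congr_deriv (Eq.symm ?_)
    have hk : (3/Real.sqrt 2 + s)*(3/Real.sqrt 2 - s) = x^2 + 4 := by
      have : (3/Real.sqrt 2)^2 = 9/2 := by rw [div_pow, hr2]; norm_num
      nlinarith [hss, hr2]
    rw [div_sub_div _ _ (ne_of_gt hk1) (ne_of_gt hk2), hk]
    rw [div_eq_div_iff (by positivity) (by positivity)]
    field_simp
    linear_combination (-3*x) * hr
  -- combine
  have hF : HasDerivAt Faux
      (Real.sqrt 2/π * ((2/5) * (Real.sqrt 2 * (1/(Real.sqrt 2 * (x+1) * s)))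
        + (3/5) * (-(Real.sqrt 2/6) * (-(3*Real.sqrt 2*x)/((x^2+4)*s))
           - (Real.sqrt 2/6) * (3*Real.sqrt 2/((x^2+4) * s))))) x := by
    unfold Faux
    exact ((((hA.const_mul (Real.sqrt 2)).const_mul (2/5)).add
      (((hL.const_mul (-(Real.sqrt 2/6))).sub (hB.const_mul (Real.sqrt 2/6))).const_mul
        (3/5))).const_mul (Real.sqrt 2/π))
  convert hF using 1
  have hπ : (0:ℝ) < π := Real.pi_pos
  have h1x2 : (0:ℝ) < 1 - x^2 := by nlinarith
  have step : (Real.sqrt 2/π * ((2/5) * (Real.sqrt 2 * (1/(Real.sqrt 2 * (x+1) * s)))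
        + (3/5) * (-(Real.sqrt 2/6) * (-(3*Real.sqrt 2*x)/((x^2+4)*s))
           - (Real.sqrt 2/6) * (3*Real.sqrt 2/((x^2+4) * s)))))
      = Real.sqrt 2/π * ((2/5) * (1/((x+1)*s)) + (3/5)*((x-1)/((x^2+4)*s))) := by
    have hπ' : π ≠ 0 := ne_of_gt hπ
    field_simp
    linear_combination (9*(x^2-1)) * hr
  rw [step]
  field_simp
  linear_combination (5*x^4-5) * hr

lemma Faux_cont : ContinuousOn Faux (Icc (-(1/Real.sqrt 2)) (1/Real.sqrt 2)) := by
  have hr0 : (0:ℝ) < Real.sqrt 2 := Real.sqrt_pos.mpr (by norm_num)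
  have hr : Real.sqrt 2 * Real.sqrt 2 = 2 := Real.mul_self_sqrt (by norm_num)
  have hr1 : (1:ℝ) < Real.sqrt 2 := by nlinarith
  have hs_cont : Continuous (fun x : ℝ => Real.sqrt (1/2 - x^2)) := by
    exact Real.continuous_sqrt.comp (by continuity)
  have hks : ∀ x : ℝ, Real.sqrt (1/2 - x^2) < 3/Real.sqrt 2 := by
    intro x
    rw [Real.sqrt_lt' (by positivity)]
    have : (3/Real.sqrt 2)^2 = 9/2 := by
      rw [div_pow, (by rw [sq, hr] : Real.sqrt 2 ^ 2 = (2:ℝ))]; norm_num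
    nlinarith [sq_nonneg x]
  unfold Faux
  apply ContinuousOn.mul continuousOn_const
  apply ContinuousOn.add
  · apply ContinuousOn.mul continuousOn_const
    apply ContinuousOn.mul continuousOn_const
    apply Real.continuous_arcsin.comp_continuousOn
    apply ContinuousOn.div (by fun_prop) (by fun_prop)
    intro x hx
    have h1 : -(1/Real.sqrt 2) ≤ x := hx.1
    have : 1/Real.sqrt 2 < 1 := (div_lt_one hr0).mpr hr1
    have : 0 < x + 1 := by linarith
    positivity
  · apply ContinuousOn.mul continuousOn_const
    apply ContinuousOn.sub
    · apply ContinuousOn.mul continuousOn_const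
      apply ContinuousOn.sub
      · apply ContinuousOn.log (by fun_prop)
        intro x hx
        have := Real.sqrt_nonneg (1/2 - x^2)
        positivity
      · apply ContinuousOn.log (by fun_prop)
        intro x hx
        have := hks x
        intro h
        rw [sub_eq_zero] at h
        exact absurd h.symm (ne_of_lt this)
    · apply ContinuousOn.mul continuousOn_const
      apply Real.continuous_arcsin.comp_continuousOn
      apply ContinuousOn.div (by fun_prop) (by fun_prop)
      intro x hx
      have : (0:ℝ) < x^2 + 4 := by positivity
      positivity

theorem weight_integral_example :
    ∫ x in (-(1 / Real.sqrt 2))..(1 / Real.sqrt 2),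
      (2 * (1 - x ^ 3 + x ^ 2 - x) / (x ^ 2 + 4)) *
        ((1 / Real.sqrt 2) / (π * (1 - x ^ 2) * Real.sqrt (1 / 2 - x ^ 2))) = 3 / 5 := by
  have hr0 : (0:ℝ) < Real.sqrt 2 := Real.sqrt_pos.mpr (by norm_num)
  have hr : Real.sqrt 2 * Real.sqrt 2 = 2 := Real.mul_self_sqrt (by norm_num)
  have hr2 : Real.sqrt 2 ^ 2 = 2 := by rw [sq, hr]
  have hr1 : (1:ℝ) < Real.sqrt 2 := by nlinarith
  have ha0 : (0:ℝ) < 1/Real.sqrt 2 := by positivity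
  have hab : -(1/Real.sqrt 2) ≤ 1/Real.sqrt 2 := by linarith
  set g : ℝ → ℝ := fun x => (2 * (1 - x ^ 3 + x ^ 2 - x) / (x ^ 2 + 4)) *
        ((1 / Real.sqrt 2) / (π * (1 - x ^ 2) * Real.sqrt (1 / 2 - x ^ 2))) with hgdef
  have hderiv : ∀ x ∈ Ioo (-(1/Real.sqrt 2)) (1/Real.sqrt 2), HasDerivAt Faux (g x) x :=
    fun x hx => Faux_deriv x hx.1 hx.2
  have hnonneg : ∀ x ∈ Ioo (-(1/Real.sqrt 2)) (1/Real.sqrt 2), 0 ≤ g x := by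
    intro x hx
    have hx2 : x < 1 := lt_of_lt_of_le hx.2 (by nlinarith [(div_lt_one hr0).mpr hr1])
    have hx2' : x^2 < 1/2 := by
      nlinarith [mul_pos (sub_pos.2 hx.2) (show (0:ℝ) < 1/Real.sqrt 2 + x by linarith [hx.1]),
        (show (1/Real.sqrt 2)^2 = 1/2 by rw [div_pow, one_pow, hr2])]
    have h1x2 : (0:ℝ) ≤ 1 - x^2 := by linarith
    apply mul_nonneg
    · apply div_nonneg _ (by positivity)
      nlinarith [sq_nonneg x]
    · apply div_nonneg (by positivity)
      exact mul_nonneg (mul_nonneg Real.pi_pos.le h1x2) (Real.sqrt_nonneg _)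
  have hint : IntervalIntegrable g MeasureTheory.volume (-(1/Real.sqrt 2)) (1/Real.sqrt 2) := by
    apply intervalIntegral.intervalIntegrable_deriv_of_nonneg
    · rw [uIcc_of_le hab]; exact Faux_cont
    · rw [min_eq_left hab, max_eq_right hab]; exact hderiv
    · rw [min_eq_left hab, max_eq_right hab]; exact hnonneg
  rw [show (∫ x in (-(1 / Real.sqrt 2))..(1 / Real.sqrt 2),
      (2 * (1 - x ^ 3 + x ^ 2 - x) / (x ^ 2 + 4)) *
        ((1 / Real.sqrt 2) / (π * (1 - x ^ 2) * Real.sqrt (1 / 2 - x ^ 2)))) =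
      ∫ x in (-(1 / Real.sqrt 2))..(1 / Real.sqrt 2), g x from rfl]
  rw [intervalIntegral.integral_eq_sub_of_hasDerivAt_of_le hab Faux_cont hderiv hint]
  -- now evaluate Faux at the endpoints
  have hπ : π ≠ 0 := Real.pi_ne_zero
  have hinv : (1/Real.sqrt 2)^2 = 1/2 := by rw [div_pow, one_pow, hr2]
  have hs_a : Real.sqrt (1/2 - (1/Real.sqrt 2)^2) = 0 := by rw [hinv]; simp
  have hs_a' : Real.sqrt (1/2 - (-(1/Real.sqrt 2))^2) = 0 := by rw [neg_sq, hinv]; simp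
  have harg1 : (1 + 2*(1/Real.sqrt 2)) / (Real.sqrt 2 * ((1/Real.sqrt 2) + 1)) = 1 := by
    rw [div_eq_one_iff_eq (by positivity)]
    field_simp
    linear_combination -hr
  have hd2 : (0:ℝ) < Real.sqrt 2 * (-(1/Real.sqrt 2) + 1) := by
    have : 1/Real.sqrt 2 < 1 := (div_lt_one hr0).mpr hr1
    nlinarith
  have harg1' : (1 + 2*(-(1/Real.sqrt 2))) / (Real.sqrt 2 * (-(1/Real.sqrt 2) + 1)) = -1 := by
    rw [div_eq_iff (ne_of_gt hd2)]
    field_simp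
    linear_combination hr
  have hq32 : Real.sqrt ((1/Real.sqrt 2)^2 + 4) = 3/Real.sqrt 2 := by
    rw [show (1/Real.sqrt 2)^2 + 4 = (3/Real.sqrt 2)^2 by
      rw [div_pow, div_pow, one_pow, hr2]; norm_num]
    exact Real.sqrt_sq (by positivity)
  have harg2 : 3*(1/Real.sqrt 2) / Real.sqrt ((1/Real.sqrt 2)^2 + 4) = 1 := by
    rw [hq32]; field_simp
  have hq32' : Real.sqrt ((-(1/Real.sqrt 2))^2 + 4) = 3/Real.sqrt 2 := by
    rw [neg_sq]; exact hq32
  have harg2' : 3*(-(1/Real.sqrt 2)) / Real.sqrt ((-(1/Real.sqrt 2))^2 + 4) = -1 := by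
    rw [hq32']; field_simp
  unfold Faux
  rw [harg1, harg1', harg2, harg2', hs_a, hs_a', Real.arcsin_one, Real.arcsin_neg_one]
  rw [add_zero, sub_zero, sub_self]
  field_simp
  ring_nf
  rw [hr2]
  ring
end

section
/- For the two-phase QW example, C + ∫_{−1/√2}^{1/√2} w(x) f_K(x;1/√2) dx = 1 where C = 2/5 and w(x) = 2(1−x³+x²−x)/(x²+4): i.e., 2/5 + ∫_{−1/√2}^{1/√2} 2(1−x³+x²−x)/((x²+4)·√2·π(1−x²)√(1/2−x²)) dx = 1. -/
open Real Set

noncomputable def Fant (x : ℝ) : ℝ :=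
  4/(5*π) * arcsin ((1+2*x)/(Real.sqrt 2*(1+x)))
  - 1/(5*π) * arcsin (3*x/Real.sqrt (x^2+4))
  - 1/(5*π) * (Real.log (3 + Real.sqrt 2 * Real.sqrt (1/2 - x^2))
             - Real.log (3 - Real.sqrt 2 * Real.sqrt (1/2 - x^2)))

lemma sqrt2_one_lt : (1:ℝ) < Real.sqrt 2 := by
  have h : (1:ℝ) = Real.sqrt 1 := (Real.sqrt_one).symm
  rw [h]; exact Real.sqrt_lt_sqrt (by norm_num) (by norm_num)

lemma key_le (x : ℝ) : Real.sqrt 2 * Real.sqrt (1/2 - x^2) ≤ 1 := by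
  have h1 : Real.sqrt (1/2 - x^2) ≤ Real.sqrt (1/2) :=
    Real.sqrt_le_sqrt (by nlinarith [sq_nonneg x])
  have h2 : Real.sqrt 2 * Real.sqrt (1/2) = 1 := by
    rw [← Real.sqrt_mul (by norm_num)]; norm_num
  calc Real.sqrt 2 * Real.sqrt (1/2 - x^2) ≤ Real.sqrt 2 * Real.sqrt (1/2) :=
        mul_le_mul_of_nonneg_left h1 (Real.sqrt_nonneg 2)
    _ = 1 := h2

set_option maxHeartbeats 1000000 in
lemma Fant_deriv (x : ℝ) (hx1 : -(1/Real.sqrt 2) < x) (hx2 : x < 1/Real.sqrt 2) :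
    HasDerivAt Fant
      (2 * (1 - x ^ 3 + x ^ 2 - x) /
        ((x ^ 2 + 4) * Real.sqrt 2 * π * (1 - x ^ 2) * Real.sqrt (1 / 2 - x ^ 2))) x := by
  set s := Real.sqrt 2 with hsdef
  have hs2 : s^2 = 2 := Real.sq_sqrt (by norm_num)
  have hs0 : 0 < s := Real.sqrt_pos.mpr (by norm_num)
  have hs1 : 1 < s := sqrt2_one_lt
  have hxx : x^2 < 1/2 := by
    have h := sq_lt_sq' hx1 hx2
    have h' : (1/s)^2 = 1/2 := by rw [div_pow, hs2]; norm_num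
    rwa [h'] at h
  have hq0 : (0:ℝ) < 1/2 - x^2 := by linarith
  set q := Real.sqrt (1/2 - x^2) with hqdef
  have hq2 : q^2 = 1/2 - x^2 := Real.sq_sqrt hq0.le
  have hqpos : 0 < q := Real.sqrt_pos.mpr hq0
  have h1x : 0 < 1 + x := by
    have h' : 1/s < 1 := by rw [div_lt_one hs0]; exact hs1
    linarith
  set r := Real.sqrt (x^2+4) with hrdef
  have hr2 : r^2 = x^2+4 := Real.sq_sqrt (by positivity)
  have hrpos : 0 < r := Real.sqrt_pos.mpr (by positivity)
  have hπ : (0:ℝ) < π := pi_pos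
  -- term 1
  have hden1 : s*(1+x) ≠ 0 := by positivity
  have hdnum : HasDerivAt (fun y : ℝ => 1+2*y) 2 x := by
    simpa using ((hasDerivAt_id x).const_mul (2:ℝ)).const_add (1:ℝ)
  have hdden : HasDerivAt (fun y : ℝ => s*(1+y)) s x := by
    simpa using (((hasDerivAt_id x).const_add (1:ℝ)).const_mul s)
  have hy1 : HasDerivAt (fun y : ℝ => (1+2*y)/(s*(1+y)))
      ((2*(s*(1+x)) - (1+2*x)*s)/(s*(1+x))^2) x := hdnum.div hdden hden1
  have hy1sq : ((1+2*x)/(s*(1+x)))^2 < 1 := by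
    rw [div_pow, div_lt_one (by positivity)]
    nlinarith
  have hy1ne1 : (1+2*x)/(s*(1+x)) ≠ -1 := by
    intro h; rw [h] at hy1sq; norm_num at hy1sq
  have hy1ne2 : (1+2*x)/(s*(1+x)) ≠ 1 := by
    intro h; rw [h] at hy1sq; norm_num at hy1sq
  have hsq1 : Real.sqrt (1 - ((1+2*x)/(s*(1+x)))^2) = q/(1+x) := by
    rw [show 1 - ((1+2*x)/(s*(1+x)))^2 = (q/(1+x))^2 by
      field_simp; ring_nf; rw [hs2, hq2]; ring]
    exact Real.sqrt_sq (by positivity)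
  have hT1 : HasDerivAt (fun y : ℝ => arcsin ((1+2*y)/(s*(1+y))))
      (1 / Real.sqrt (1 - ((1+2*x)/(s*(1+x)))^2) *
        ((2*(s*(1+x)) - (1+2*x)*s)/(s*(1+x))^2)) x :=
    by have := (Real.hasDerivAt_arcsin hy1ne1 hy1ne2).comp x hy1; exact this
  -- term 2
  have hdr : HasDerivAt (fun y : ℝ => Real.sqrt (y^2+4)) ((2*x)/(2*r)) x := by
    have h1 : HasDerivAt (fun y : ℝ => y^2+4) (2*x) x := by
      simpa using (hasDerivAt_pow 2 x).add_const (4:ℝ)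
    exact h1.sqrt (by positivity)
  have hy2 : HasDerivAt (fun y : ℝ => 3*y/Real.sqrt (y^2+4))
      ((3*r - 3*x*((2*x)/(2*r)))/r^2) x := by
    have h3 : HasDerivAt (fun y : ℝ => 3*y) 3 x := by
      simpa using (hasDerivAt_id x).const_mul (3:ℝ)
    exact h3.div hdr hrpos.ne'
  have hy2sq : (3*x/r)^2 < 1 := by
    rw [div_pow, div_lt_one (by positivity), hr2]
    nlinarith
  have hy2ne1 : 3*x/r ≠ -1 := by intro h; rw [h] at hy2sq; norm_num at hy2sq
  have hy2ne2 : 3*x/r ≠ 1 := by intro h; rw [h] at hy2sq; norm_num at hy2sq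
  have hsq2 : Real.sqrt (1 - (3*x/r)^2) = 2*s*q/r := by
    rw [show 1 - (3*x/r)^2 = (2*s*q/r)^2 by
      field_simp; ring_nf; rw [hs2, hq2, hr2]; ring]
    exact Real.sqrt_sq (by positivity)
  have hT2 : HasDerivAt (fun y : ℝ => arcsin (3*y/Real.sqrt (y^2+4)))
      (1 / Real.sqrt (1 - (3*x/r)^2) * ((3*r - 3*x*((2*x)/(2*r)))/r^2)) x :=
    by have := (Real.hasDerivAt_arcsin hy2ne1 hy2ne2).comp x hy2; exact this
  -- term 3
  have hdq : HasDerivAt (fun y : ℝ => Real.sqrt (1/2 - y^2)) (-(2*x)/(2*q)) x := by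
    have h1 : HasDerivAt (fun y : ℝ => 1/2 - y^2) (-(2*x)) x := by
      simpa using ((hasDerivAt_pow 2 x)).const_sub (1/2:ℝ)
    exact h1.sqrt hq0.ne'
  have hsq3 : s*q < 3 := by
    have := key_le x
    rw [← hsdef, ← hqdef] at this
    linarith
  have hsqpos : 0 < s*q := by positivity
  have hT3a : HasDerivAt (fun y : ℝ => Real.log (3 + s * Real.sqrt (1/2 - y^2)))
      ((s * (-(2*x)/(2*q)))/(3 + s*q)) x := by
    have h1 : HasDerivAt (fun y : ℝ => 3 + s * Real.sqrt (1/2 - y^2)) (s * (-(2*x)/(2*q))) x :=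
      (hdq.const_mul s).const_add 3
    exact h1.log (by positivity)
  have hT3b : HasDerivAt (fun y : ℝ => Real.log (3 - s * Real.sqrt (1/2 - y^2)))
      ((-(s * (-(2*x)/(2*q))))/(3 - s*q)) x := by
    have h1 : HasDerivAt (fun y : ℝ => 3 - s * Real.sqrt (1/2 - y^2)) (-(s * (-(2*x)/(2*q)))) x :=
      (hdq.const_mul s).const_sub 3
    exact h1.log (by linarith)
  have hF : HasDerivAt Fant
      (4/(5*π) * (1 / Real.sqrt (1 - ((1+2*x)/(s*(1+x)))^2) *
        ((2*(s*(1+x)) - (1+2*x)*s)/(s*(1+x))^2))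
      - 1/(5*π) * (1 / Real.sqrt (1 - (3*x/r)^2) * ((3*r - 3*x*((2*x)/(2*r)))/r^2))
      - 1/(5*π) * ((s * (-(2*x)/(2*q)))/(3 + s*q) - (-(s * (-(2*x)/(2*q))))/(3 - s*q))) x :=
    ((hT1.const_mul _).sub (hT2.const_mul _)).sub ((hT3a.sub hT3b).const_mul _)
  convert hF using 1
  rw [hsq1, hsq2]
  have h1 : (0:ℝ) < 1 - x^2 := by nlinarith
  have h2 : (0:ℝ) < 3 + s*q := by linarith
  have h3 : (0:ℝ) < 3 - s*q := by linarith
  have hs3 : s^3 = 2*s := by linear_combination s*hs2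
  have hs5 : s^5 = 4*s := by linear_combination (s^3+2*s)*hs2
  have hq4 : q^4 = (1/2-x^2)^2 := by linear_combination (q^2+1/2-x^2)*hq2
  have hq6 : q^6 = (1/2-x^2)^3 := by linear_combination (q^4+q^2*(1/2-x^2)+(1/2-x^2)^2)*hq2
  have hr3 : r^3 = (x^2+4)*r := by linear_combination r*hr2
  field_simp
  ring_nf
  simp only [hs5, hs3, hq6, hq4, hr3, hs2, hq2, hr2]
  ring

lemma Fant_cont : ContinuousOn Fant (Icc (-(1/Real.sqrt 2)) (1/Real.sqrt 2)) := by
  have hs0 : 0 < Real.sqrt 2 := Real.sqrt_pos.mpr (by norm_num)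
  have h1x : ∀ x ∈ Icc (-(1/Real.sqrt 2)) (1/Real.sqrt 2), (0:ℝ) < 1 + x := by
    intro x hx
    have h' : 1/Real.sqrt 2 < 1 := by rw [div_lt_one hs0]; exact sqrt2_one_lt
    have := hx.1
    linarith
  apply ContinuousOn.sub
  apply ContinuousOn.sub
  · apply ContinuousOn.mul continuousOn_const
    apply Real.continuous_arcsin.comp_continuousOn
    apply ContinuousOn.div (by fun_prop) (by fun_prop)
    intro x hx
    have := h1x x hx
    positivity
  · apply ContinuousOn.mul continuousOn_const
    apply Real.continuous_arcsin.comp_continuousOn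
    apply ContinuousOn.div (by fun_prop) (by fun_prop)
    intro x _
    have : (0:ℝ) < Real.sqrt (x^2+4) := Real.sqrt_pos.mpr (by positivity)
    exact this.ne'
  · apply ContinuousOn.mul continuousOn_const
    apply ContinuousOn.sub
    · apply ContinuousOn.log (by fun_prop)
      intro x _
      have : (0:ℝ) ≤ Real.sqrt 2 * Real.sqrt (1/2 - x^2) := by positivity
      positivity
    · apply ContinuousOn.log (by fun_prop)
      intro x _
      have := key_le x
      intro h; linarith [key_le x]

theorem total_mass_one :
    (2 / 5 : ℝ) + ∫ x in (-(1 / Real.sqrt 2))..(1 / Real.sqrt 2),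
      2 * (1 - x ^ 3 + x ^ 2 - x) /
        ((x ^ 2 + 4) * Real.sqrt 2 * π * (1 - x ^ 2) * Real.sqrt (1 / 2 - x ^ 2)) = 1 := by
  have hs0 : 0 < Real.sqrt 2 := Real.sqrt_pos.mpr (by norm_num)
  have hs2 : Real.sqrt 2 ^ 2 = 2 := Real.sq_sqrt (by norm_num)
  have hab : -(1/Real.sqrt 2) ≤ 1/Real.sqrt 2 := by
    have h : (0:ℝ) < 1/Real.sqrt 2 := by positivity
    linarith
  have hπ : (0:ℝ) < π := pi_pos
  set g : ℝ → ℝ := fun x => 2 * (1 - x ^ 3 + x ^ 2 - x) /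
        ((x ^ 2 + 4) * Real.sqrt 2 * π * (1 - x ^ 2) * Real.sqrt (1 / 2 - x ^ 2)) with hg
  have hderiv : ∀ x ∈ Ioo (-(1/Real.sqrt 2)) (1/Real.sqrt 2), HasDerivAt Fant (g x) x :=
    fun x hx => Fant_deriv x hx.1 hx.2
  have hpos : ∀ x ∈ Ioo (-(1/Real.sqrt 2)) (1/Real.sqrt 2), 0 ≤ g x := by
    intro x hx
    have hxx : x^2 < 1/2 := by
      have h := sq_lt_sq' hx.1 hx.2
      have h' : (1/Real.sqrt 2)^2 = 1/2 := by rw [div_pow, hs2]; norm_num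
      rwa [h'] at h
    have hx1 : x < 1 := by nlinarith
    apply div_nonneg
    · nlinarith [sq_nonneg x]
    · have h1 : (0:ℝ) ≤ 1 - x^2 := by nlinarith
      have h2 : (0:ℝ) ≤ Real.sqrt (1/2 - x^2) := Real.sqrt_nonneg _
      have h3 : (0:ℝ) ≤ (x^2+4) * Real.sqrt 2 * π := by positivity
      nlinarith [mul_nonneg (mul_nonneg h3 h1) h2]
  have hint : IntervalIntegrable g MeasureTheory.volume (-(1/Real.sqrt 2)) (1/Real.sqrt 2) := by
    apply intervalIntegral.intervalIntegrable_deriv_of_nonneg (g := Fant)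
    · rw [uIcc_of_le hab]; exact Fant_cont
    · intro x hx; rw [min_eq_left hab, max_eq_right hab] at hx; exact hderiv x hx
    · intro x hx; rw [min_eq_left hab, max_eq_right hab] at hx; exact hpos x hx
  have hFTC := intervalIntegral.integral_eq_sub_of_hasDeriv_right_of_le hab Fant_cont
    (fun x hx => (hderiv x hx).hasDerivWithinAt) hint
  rw [hFTC]
  -- endpoint values
  have e0 : (1/2 : ℝ) - (1/Real.sqrt 2)^2 = 0 := by rw [div_pow, hs2]; norm_num
  have e0' : (1/2 : ℝ) - (-(1/Real.sqrt 2))^2 = 0 := by rw [neg_pow, div_pow]; rw [hs2]; norm_num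
  have e1 : (1+2*(1/Real.sqrt 2))/(Real.sqrt 2*(1+1/Real.sqrt 2)) = 1 := by
    rw [div_eq_one_iff_eq (by positivity)]
    field_simp
    linarith [hs2]
  have e2 : (1+2*(-(1/Real.sqrt 2)))/(Real.sqrt 2*(1+(-(1/Real.sqrt 2)))) = -1 := by
    have hd : (0:ℝ) < 1 + (-(1/Real.sqrt 2)) := by
      have h' : 1/Real.sqrt 2 < 1 := by rw [div_lt_one hs0]; exact sqrt2_one_lt
      linarith
    rw [div_eq_iff (by positivity)]
    field_simp
    linarith [hs2]
  have e3 : Real.sqrt ((1/Real.sqrt 2)^2+4) = 3/Real.sqrt 2 := by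
    rw [show (1/Real.sqrt 2)^2+4 = (3/Real.sqrt 2)^2 by rw [div_pow, div_pow, hs2]; norm_num]
    exact Real.sqrt_sq (by positivity)
  have e3' : Real.sqrt ((-(1/Real.sqrt 2))^2+4) = 3/Real.sqrt 2 := by
    rw [neg_pow]; rw [show (-1:ℝ)^2 * (1/Real.sqrt 2)^2 = (1/Real.sqrt 2)^2 by ring]
    exact e3
  have e4 : 3*(1/Real.sqrt 2)/(3/Real.sqrt 2) = 1 := by field_simp
  have e5 : 3*(-(1/Real.sqrt 2))/(3/Real.sqrt 2) = -1 := by field_simp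
  simp only [Fant, e0, e0', Real.sqrt_zero, mul_zero, add_zero, sub_zero, e1, e2, e3, e3']
  rw [e4, e5, Real.arcsin_one, Real.arcsin_neg_one]
  field_simp
  ring
end
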